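/- (Dehornoy) The relation <_L on the free monogenic left-distributive algebra W/≡ is irreflexive; consequently <_L is a strict linear order on W/≡ (for all words a,b exactly one of a ≡ b, a <_L b, b <_L a holds modulo ≡), and W/≡ satisfies left cancellation: if c·a ≡ c·b then a ≡ b. -/

import Mathlib

/-- The free magma on one generator: words built from `1` using `·`. -/
inductive W : Type
  | one : W
  | mul : W → W → W

/-- The smallest congruence on `W` containing all instances of the
left distributive law `a·(b·c) = (a·b)·(a·c)`. -/
inductive LDEq : W → W → Prop
  | refl (a : W) : LDEq a a
  | symm {a b : W} : LDEq a b → LDEq b a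
  | trans {a b c : W} : LDEq a b → LDEq b c → LDEq a c
  | congr {a a' b b' : W} : LDEq a a' → LDEq b b' → LDEq (a.mul b) (a'.mul b')
  | ld (a b c : W) : LDEq (a.mul (b.mul c)) ((a.mul b).mul (a.mul c))

/-- `a <_L b` modulo `≡`: there exist `k ≥ 1` and words `c_1, …, c_k` with
`((a·c_1)·c_2)···c_k ≡ b`. -/
def leftSubL (a b : W) : Prop :=
  ∃ l : List W, l ≠ [] ∧ LDEq (l.foldl W.mul a) b

namespace LDP

/-- One-step LD expansion. -/
inductive Stp : W → W → Prop
  | ld (a b c : W) : Stp (a.mul (b.mul c)) ((a.mul b).mul (a.mul c))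
  | left {a a' : W} (b : W) : Stp a a' → Stp (a.mul b) (a'.mul b)
  | right (a : W) {b b' : W} : Stp b b' → Stp (a.mul b) (a.mul b')

/-- Multi-step expansion. -/
def Exp : W → W → Prop := Relation.ReflTransGen Stp

theorem Exp.refl {a : W} : Exp a a := Relation.ReflTransGen.refl

theorem Exp.trans {a b c : W} (h1 : Exp a b) (h2 : Exp b c) : Exp a c :=
  Relation.ReflTransGen.trans h1 h2

theorem Exp.single {a b : W} (h : Stp a b) : Exp a b :=
  Relation.ReflTransGen.single h

theorem Stp.ldeq {a b : W} (h : Stp a b) : LDEq a b := by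
  induction h with
  | ld a b c => exact LDEq.ld a b c
  | left b _ ih => exact LDEq.congr ih (LDEq.refl b)
  | right a _ ih => exact LDEq.congr (LDEq.refl a) ih

theorem Exp.ldeq {a b : W} (h : Exp a b) : LDEq a b := by
  induction h with
  | refl => exact LDEq.refl a
  | tail _ h ih => exact LDEq.trans ih h.ldeq

theorem Exp.mul_left {a a' : W} (b : W) (h : Exp a a') : Exp (a.mul b) (a'.mul b) := by
  induction h with
  | refl => exact Exp.refl
  | tail _ h ih => exact ih.trans (Exp.single (Stp.left b h))

theorem Exp.mul_right (a : W) {b b' : W} (h : Exp b b') : Exp (a.mul b) (a.mul b') := by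
  induction h with
  | refl => exact Exp.refl
  | tail _ h ih => exact ih.trans (Exp.single (Stp.right a h))

theorem Exp.mul_mul {a a' b b' : W} (h1 : Exp a a') (h2 : Exp b b') :
    Exp (a.mul b) (a'.mul b') := (h1.mul_left b).trans (Exp.mul_right a' h2)

/-- Full left distribution of `a` into `b`. -/
def star (a : W) : W → W
  | .one => a.mul .one
  | .mul b c => (star a b).mul (star a c)

/-- The ∂ operator. -/
def dd : W → W
  | .one => .one
  | .mul a b => star (dd a) (dd b)

theorem exp_star (a b : W) : Exp (a.mul b) (star a b) := by
  induction b with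
  | one => exact Exp.refl
  | mul b c ihb ihc =>
    exact (Exp.single (Stp.ld a b c)).trans (Exp.mul_mul ihb ihc)

theorem star_mono_right (a : W) {b b' : W} (h : Stp b b') :
    Exp (star a b) (star a b') := by
  induction h with
  | ld p q r =>
    exact (Exp.single (Stp.ld (star a p) (star a q) (star a r)))
  | left c _ ih => exact Exp.mul_left _ ih
  | right c _ ih => exact Exp.mul_right _ ih

theorem star_mono_right' (a : W) {b b' : W} (h : Exp b b') :
    Exp (star a b) (star a b') := by
  induction h with
  | refl => exact Exp.refl
  | tail _ h ih => exact ih.trans (star_mono_right a h)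

theorem star_mono_left {a a' : W} (b : W) (h : Exp a a') :
    Exp (star a b) (star a' b) := by
  induction b with
  | one => exact Exp.mul_left _ h
  | mul b c ihb ihc => exact Exp.mul_mul ihb ihc

/-- Key lemma: `(a*b)·(a*c)` expands to `a*(b*c)`. -/
theorem keyK (a b c : W) : Exp ((star a b).mul (star a c)) (star a (star b c)) := by
  induction c with
  | one => exact Exp.refl
  | mul c1 c2 ih1 ih2 =>
    exact (Exp.single (Stp.ld (star a b) (star a c1) (star a c2))).trans
      (Exp.mul_mul ih1 ih2)

/-- Key lemma 2: `a*(b*c)` expands to `(a*b)*(a*c)`. -/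
theorem keyK2 (a b c : W) : Exp (star a (star b c)) (star (star a b) (star a c)) := by
  induction c with
  | one =>
    exact (Exp.single (Stp.ld (star a b) a .one)).trans
      (Exp.mul_left _ (exp_star (star a b) a))
  | mul c1 c2 ih1 ih2 => exact Exp.mul_mul ih1 ih2

theorem exp_dd (t : W) : Exp t (dd t) := by
  induction t with
  | one => exact Exp.refl
  | mul a b iha ihb => exact (Exp.mul_mul iha ihb).trans (exp_star (dd a) (dd b))

theorem stp_exp_dd {t t' : W} (h : Stp t t') : Exp t' (dd t) := by
  induction h with
  | ld a b c =>
    exact (Exp.mul_mul ((exp_dd (a.mul b))) (exp_dd (a.mul c))).trans (keyK (dd a) (dd b) (dd c))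
  | left b _ ih => exact (Exp.mul_mul ih (exp_dd b)).trans (exp_star _ _)
  | right a _ ih => exact (Exp.mul_mul (exp_dd a) ih).trans (exp_star _ _)

theorem dd_mono {t t' : W} (h : Stp t t') : Exp (dd t) (dd t') := by
  induction h with
  | ld a b c => exact keyK2 (dd a) (dd b) (dd c)
  | left b _ ih => exact star_mono_left _ ih
  | right a _ ih => exact star_mono_right' _ ih

theorem dd_mono' {t t' : W} (h : Exp t t') : Exp (dd t) (dd t') := by
  induction h with
  | refl => exact Exp.refl
  | tail _ h ih => exact ih.trans (dd_mono h)

def ddn : ℕ → W → W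
  | 0, t => t
  | n + 1, t => dd (ddn n t)

theorem exp_ddn (n : ℕ) (t : W) : Exp t (ddn n t) := by
  induction n with
  | zero => exact Exp.refl
  | succ n ih => exact ih.trans (exp_dd _)

theorem exp_ddn_le {m n : ℕ} (t : W) (h : m ≤ n) : Exp (ddn m t) (ddn n t) := by
  induction n with
  | zero => simp_all; exact Exp.refl
  | succ n ih =>
    rcases Nat.lt_or_ge m (n+1) with h' | h'
    · exact (ih (Nat.lt_succ_iff.mp h')).trans (exp_dd _)
    · have : m = n + 1 := le_antisymm h h'
      subst this; exact Exp.refl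

theorem exp_to_ddn {t v : W} (h : Exp t v) : ∃ n, Exp v (ddn n t) := by
  induction h with
  | refl => exact ⟨0, Exp.refl⟩
  | tail hv h ih =>
    obtain ⟨n, hn⟩ := ih
    exact ⟨n + 1, (stp_exp_dd h).trans (dd_mono' hn)⟩

theorem confluence {t u v : W} (h1 : Exp t u) (h2 : Exp t v) :
    ∃ w, Exp u w ∧ Exp v w := by
  obtain ⟨n, hn⟩ := exp_to_ddn h1
  obtain ⟨m, hm⟩ := exp_to_ddn h2
  exact ⟨ddn (max n m) t, hn.trans (exp_ddn_le t (le_max_left n m)),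
    hm.trans (exp_ddn_le t (le_max_right n m))⟩

/-- Church–Rosser: equivalent terms have a common expansion. -/
theorem cr {s t : W} (h : LDEq s t) : ∃ w, Exp s w ∧ Exp t w := by
  induction h with
  | refl a => exact ⟨a, Exp.refl, Exp.refl⟩
  | symm _ ih => obtain ⟨w, h1, h2⟩ := ih; exact ⟨w, h2, h1⟩
  | trans _ _ ih1 ih2 =>
    obtain ⟨w1, ha, hb⟩ := ih1
    obtain ⟨w2, hc, hd⟩ := ih2
    obtain ⟨w, he, hf⟩ := confluence hb hc
    exact ⟨w, ha.trans he, hd.trans hf⟩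
  | congr _ _ ih1 ih2 =>
    obtain ⟨w1, ha, hb⟩ := ih1
    obtain ⟨w2, hc, hd⟩ := ih2
    exact ⟨w1.mul w2, Exp.mul_mul ha hc, Exp.mul_mul hb hd⟩
  | ld a b c => exact ⟨(a.mul b).mul (a.mul c), Exp.single (Stp.ld a b c), Exp.refl⟩

end LDP
namespace LDP

/-- The left spine of a term: `t = ((…(one·d₁)·d₂)…)·dₘ`. -/
def spine : W → List W
  | .one => []
  | .mul a b => spine a ++ [b]

theorem fold_spine (t : W) : (spine t).foldl W.mul W.one = t := by
  induction t with
  | one => rfl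
  | mul a b ih => simp [spine, List.foldl_append, ih]

/-- Spine prefix at index `k`. -/
def pref (t : W) (k : ℕ) : W := ((spine t).take k).foldl W.mul W.one

theorem pref_big {t : W} {k : ℕ} (h : (spine t).length ≤ k) : pref t k = t := by
  rw [pref, List.take_of_length_le h, fold_spine]

theorem pref_min (t : W) (k : ℕ) : pref t (min k (spine t).length) = pref t k := by
  rw [pref, pref]
  congr 1
  conv_rhs => rw [← List.take_length (l := spine t), List.take_take]

theorem pref_mul (t u : W) : pref (t.mul u) (spine t).length = t := by
  rw [pref]
  show ((spine t ++ [u]).take (spine t).length).foldl W.mul W.one = t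
  rw [List.take_left]
  exact fold_spine t

/-- One-step expansion transports spine prefixes. -/
theorem stp_pref {t t' : W} (h : Stp t t') (k : ℕ) :
    ∃ j, LDEq (pref t k) (pref t' j) := by
  induction h generalizing k with
  | ld a b c =>
    rcases le_or_gt k (spine a).length with hk | hk
    · refine ⟨k, ?_⟩
      have h1 : (spine (a.mul (b.mul c))).take k = (spine a).take k := by
        show (spine a ++ [b.mul c]).take k = _
        rw [List.take_append_of_le_length hk]
      have h2 : (spine ((a.mul b).mul (a.mul c))).take k = (spine a).take k := by
        show ((spine a ++ [b]) ++ [a.mul c]).take k = _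
        rw [List.take_append_of_le_length (by simp; omega),
          List.take_append_of_le_length hk]
      rw [pref, pref, h1, h2]
      exact LDEq.refl _
    · refine ⟨(spine ((a.mul b).mul (a.mul c))).length, ?_⟩
      rw [pref_big (le_refl _), pref_big]
      · exact LDEq.ld a b c
      · show (spine a ++ [b.mul c]).length ≤ k
        simpa using hk
  | @left a a' b hs ih =>
    rcases le_or_gt k (spine a).length with hk | hk
    · obtain ⟨j, hj⟩ := ih k
      refine ⟨min j (spine a').length, ?_⟩
      have h1 : pref (a.mul b) k = pref a k := by
        rw [pref, pref]
        congr 1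
        show (spine a ++ [b]).take k = _
        rw [List.take_append_of_le_length hk]
      have h2 : pref (a'.mul b) (min j (spine a').length) =
          pref a' (min j (spine a').length) := by
        rw [pref, pref]
        congr 1
        show (spine a' ++ [b]).take _ = _
        rw [List.take_append_of_le_length (min_le_right _ _)]
      rw [h1, h2, pref_min]
      exact hj
    · refine ⟨(spine (a'.mul b)).length, ?_⟩
      rw [pref_big, pref_big (le_refl _)]
      · exact LDEq.congr hs.ldeq (LDEq.refl b)
      · show (spine a ++ [b]).length ≤ k
        simpa using hk
  | @right a b b' hs ih =>
    rcases le_or_gt k (spine a).length with hk | hk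
    · refine ⟨k, ?_⟩
      have h1 : (spine (a.mul b)).take k = (spine a).take k := by
        show (spine a ++ [b]).take k = _
        rw [List.take_append_of_le_length hk]
      have h2 : (spine (a.mul b')).take k = (spine a).take k := by
        show (spine a ++ [b']).take k = _
        rw [List.take_append_of_le_length hk]
      rw [pref, pref, h1, h2]
      exact LDEq.refl _
    · refine ⟨(spine (a.mul b')).length, ?_⟩
      rw [pref_big (le_refl _), pref_big]
      · exact LDEq.congr (LDEq.refl a) hs.ldeq
      · show (spine a ++ [b]).length ≤ k
        simpa using hk

theorem exp_pref {t t' : W} (h : Exp t t') (k : ℕ) :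
    ∃ j, LDEq (pref t k) (pref t' j) := by
  induction h generalizing k with
  | refl => exact ⟨k, LDEq.refl _⟩
  | tail _ hs ih =>
    obtain ⟨j, hj⟩ := ih k
    obtain ⟨j', hj'⟩ := stp_pref hs j
    exact ⟨j', hj.trans hj'⟩

theorem foldl_congr {a a' : W} (l : List W) (h : LDEq a a') :
    LDEq (l.foldl W.mul a) (l.foldl W.mul a') := by
  induction l generalizing a a' with
  | nil => exact h
  | cons x xs ih => exact ih (LDEq.congr h (LDEq.refl x))

/-- Comparison of prefixes of a common term. -/
theorem pref_comp (s : W) {j1 j2 : ℕ} (h : j1 ≤ j2) :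
    pref s j1 = pref s j2 ∨ leftSubL (pref s j1) (pref s j2) := by
  have hsplit : (spine s).take j2 =
      (spine s).take j1 ++ (((spine s).take j2).drop j1) := by
    conv_lhs => rw [← List.take_append_drop j1 ((spine s).take j2)]
    rw [List.take_take, min_eq_left h]
  by_cases hnil : (((spine s).take j2).drop j1) = []
  · left
    rw [pref, pref, hsplit, hnil, List.append_nil]
  · right
    refine ⟨((spine s).take j2).drop j1, hnil, ?_⟩
    have h2 : pref s j2 =
        ((spine s).take j1 ++ ((spine s).take j2).drop j1).foldl W.mul W.one := by
      rw [pref, ← hsplit]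
    rw [h2, List.foldl_append]
    exact LDEq.refl _

/-- Core comparison: if `t₁·u ≡ t₂·v` then `t₁` and `t₂` are comparable. -/
theorem comp_core {t1 u t2 v : W} (h : LDEq (t1.mul u) (t2.mul v)) :
    LDEq t1 t2 ∨ leftSubL t1 t2 ∨ leftSubL t2 t1 := by
  obtain ⟨s, h1, h2⟩ := cr h
  obtain ⟨j1, hj1⟩ := exp_pref h1 (spine t1).length
  obtain ⟨j2, hj2⟩ := exp_pref h2 (spine t2).length
  rw [pref_mul] at hj1 hj2
  rcases Nat.le_total j1 j2 with hle | hle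
  · rcases pref_comp s hle with he | ⟨l, hl, hfold⟩
    · exact Or.inl (hj1.trans (he ▸ hj2.symm))
    · refine Or.inr (Or.inl ⟨l, hl, ?_⟩)
      exact ((foldl_congr l hj1).trans hfold).trans hj2.symm
  · rcases pref_comp s hle with he | ⟨l, hl, hfold⟩
    · exact Or.inl (hj1.trans (he ▸ hj2.symm))
    · refine Or.inr (Or.inr ⟨l, hl, ?_⟩)
      exact ((foldl_congr l hj2).trans hfold).trans hj1.symm

/-- Left powers of the generator. -/
def pw : ℕ → W
  | 0 => .one
  | n + 1 => W.one.mul (pw n)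

/-- Absorption: `t · pw n ≡ pw (n + c)` for suitable `c` and large `n`. -/
theorem absorb (t : W) : ∃ c N, 1 ≤ c ∧ ∀ n, N ≤ n → LDEq (t.mul (pw n)) (pw (n + c)) := by
  induction t with
  | one => exact ⟨1, 0, le_refl 1, fun n _ => LDEq.refl _⟩
  | mul u v ihu ihv =>
    obtain ⟨cu, Nu, hcu, hu⟩ := ihu
    obtain ⟨cv, Nv, hcv, hv⟩ := ihv
    refine ⟨cv, cu + Nu + Nv, hcv, fun n hn => ?_⟩
    set m := n - cu with hm
    have hmn : n = m + cu := by omega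
    have h1 : LDEq (pw n) (u.mul (pw m)) := by
      rw [hmn]; exact (hu m (by omega)).symm
    have h2 : LDEq ((u.mul v).mul (pw n)) (u.mul (v.mul (pw m))) :=
      (LDEq.congr (LDEq.refl _) h1).trans (LDEq.ld u v (pw m)).symm
    have h3 : LDEq (u.mul (v.mul (pw m))) (u.mul (pw (m + cv))) :=
      LDEq.congr (LDEq.refl u) (hv m (by omega))
    have h4 : LDEq (u.mul (pw (m + cv))) (pw (m + cv + cu)) := hu _ (by omega)
    have : m + cv + cu = n + cv := by omega
    exact ((h2.trans h3).trans h4).trans (this ▸ LDEq.refl _)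

/-- The comparison property. -/
theorem comparison (a b : W) : LDEq a b ∨ leftSubL a b ∨ leftSubL b a := by
  obtain ⟨ca, Na, hca, ha⟩ := absorb a
  obtain ⟨cb, Nb, hcb, hb⟩ := absorb b
  have h1 := ha (Na + Nb + cb) (by omega)
  have h2 := hb (Na + Nb + ca) (by omega)
  have he : Na + Nb + cb + ca = Na + Nb + ca + cb := by omega
  exact comp_core (h1.trans (he ▸ h2.symm))

theorem sub_congr_left {a a' b : W} (h : LDEq a a') (hs : leftSubL a b) : leftSubL a' b := by
  obtain ⟨l, hl, hf⟩ := hs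
  exact ⟨l, hl, (foldl_congr l h.symm).trans hf⟩

theorem sub_congr_right {a b b' : W} (hs : leftSubL a b) (h : LDEq b b') : leftSubL a b' := by
  obtain ⟨l, hl, hf⟩ := hs
  exact ⟨l, hl, hf.trans h⟩

theorem sub_trans {a b c : W} (h1 : leftSubL a b) (h2 : leftSubL b c) : leftSubL a c := by
  obtain ⟨l1, hl1, hf1⟩ := h1
  obtain ⟨l2, hl2, hf2⟩ := h2
  refine ⟨l1 ++ l2, by simp [hl1], ?_⟩
  rw [List.foldl_append]
  exact (foldl_congr l2 hf1).trans hf2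

theorem mul_push (c a : W) (l : List W) :
    LDEq (c.mul (l.foldl W.mul a)) ((l.map (c.mul ·)).foldl W.mul (c.mul a)) := by
  induction l generalizing a with
  | nil => exact LDEq.refl _
  | cons x xs ih =>
    exact (ih (a.mul x)).trans (foldl_congr _ (LDEq.ld c a x))

theorem sub_mul {a b : W} (c : W) (h : leftSubL a b) : leftSubL (c.mul a) (c.mul b) := by
  obtain ⟨l, hl, hf⟩ := h
  refine ⟨l.map (c.mul ·), by simpa using hl, ?_⟩
  exact (mul_push c a l).symm.trans (LDEq.congr (LDEq.refl c) hf)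

end LDP
namespace LDP

/-- Braid relator: `σᵢσᵢ₊₁σᵢ = σᵢ₊₁σᵢσᵢ₊₁`. -/
def brel1 (i : ℕ) : FreeGroup ℕ :=
  FreeGroup.of i * FreeGroup.of (i+1) * FreeGroup.of i * (FreeGroup.of (i+1) * FreeGroup.of i * FreeGroup.of (i+1))⁻¹

/-- Commutation relator. -/
def brel2 (i j : ℕ) : FreeGroup ℕ := FreeGroup.of i * FreeGroup.of j * (FreeGroup.of j * FreeGroup.of i)⁻¹

def brels : Set (FreeGroup ℕ) :=
  {r | (∃ i, r = brel1 i) ∨ ∃ i j, i + 2 ≤ j ∧ r = brel2 i j}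

/-- The braid group on infinitely many strands. -/
abbrev B := PresentedGroup brels

abbrev σ (i : ℕ) : B := PresentedGroup.of (rels := brels) i

theorem rel_one {r : FreeGroup ℕ} (h : r ∈ brels) : PresentedGroup.mk brels r = 1 := by
  have : r ∈ Subgroup.normalClosure brels := Subgroup.subset_normalClosure h
  exact (QuotientGroup.eq_one_iff r).mpr this

theorem braid_rel (i : ℕ) : σ i * σ (i+1) * σ i = σ (i+1) * σ i * σ (i+1) := by
  have := rel_one (Or.inl ⟨i, rfl⟩)
  rw [brel1] at this
  simp only [_root_.map_mul, _root_.map_inv] at this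
  rw [mul_inv_eq_one] at this
  exact this

theorem comm_rel {i j : ℕ} (h : i + 2 ≤ j) : σ i * σ j = σ j * σ i := by
  have := rel_one (Or.inr ⟨i, j, h, rfl⟩)
  rw [brel2] at this
  simp only [_root_.map_mul, _root_.map_inv] at this
  rw [mul_inv_eq_one] at this
  exact this

/-- The shift endomorphism of `B`. -/
def sh : B →* B :=
  PresentedGroup.toGroup (f := fun i => σ (i+1)) (by
    rintro r (⟨i, rfl⟩ | ⟨i, j, hij, rfl⟩)
    · rw [brel1]
      simp only [map_mul, map_inv, FreeGroup.lift_apply_of]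
      rw [mul_inv_eq_one]
      exact braid_rel (i+1)
    · rw [brel2]
      simp only [map_mul, map_inv, FreeGroup.lift_apply_of]
      rw [mul_inv_eq_one]
      exact comm_rel (by omega))

@[simp] theorem sh_σ (i : ℕ) : sh (σ i) = σ (i+1) :=
  PresentedGroup.toGroup.of (f := fun i => σ (i+1)) _

theorem comm_sh2 (g : B) : σ 0 * sh (sh g) = sh (sh g) * σ 0 := by
  have key : g ∈ Subgroup.comap (sh.comp sh) (Subgroup.centralizer {σ 0}) := by
    apply PresentedGroup.generated_by
    intro i
    simp only [Subgroup.mem_comap, MonoidHom.comp_apply]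
    rw [Subgroup.mem_centralizer_iff]
    rintro y rfl
    show σ 0 * sh (sh (σ i)) = sh (sh (σ i)) * σ 0
    rw [sh_σ, sh_σ]
    exact comm_rel (by omega)
  rw [Subgroup.mem_comap, Subgroup.mem_centralizer_iff] at key
  exact (key (σ 0) rfl)

/-- The left-distributive operation on `B`. -/
def op (a b : B) : B := a * sh b * σ 0 * (sh a)⁻¹

/-- Abstract form of the LD computation. -/
theorem grp_ld {G : Type*} [Group G] (a B' C S T A2 B2 sa : G)
    (h1 : ∀ x, S * (C * x) = C * (S * x))
    (h2 : ∀ x, A2⁻¹ * (S * (A2 * x)) = S * x)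
    (h3 : ∀ x, S * (B2⁻¹ * x) = B2⁻¹ * (S * x))
    (hbr : ∀ x, S * (T * (S * x)) = T * (S * (T * x))) :
    (a * B' * S * sa⁻¹) * (sa * C * T * A2⁻¹) * S * (A2 * T⁻¹ * B2⁻¹ * sa⁻¹) =
    a * (B' * C * T * B2⁻¹) * S * sa⁻¹ := by
  simp only [mul_assoc, inv_mul_cancel_left]
  rw [h1, h2, hbr, mul_inv_cancel_left, h3]

theorem op_ld (a b c : B) : op a (op b c) = op (op a b) (op a c) := by
  have c1 : ∀ (g : B) (x : B), σ 0 * (sh (sh g) * x) = sh (sh g) * (σ 0 * x) := by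
    intro g x
    rw [← mul_assoc, comm_sh2, mul_assoc]
  have c2 : ∀ x : B, (sh (sh a))⁻¹ * (σ 0 * (sh (sh a) * x)) = σ 0 * x := by
    intro x
    rw [← mul_assoc (σ 0), comm_sh2, mul_assoc (sh (sh a)), inv_mul_cancel_left]
  have c3 : ∀ x : B, σ 0 * ((sh (sh b))⁻¹ * x) = (sh (sh b))⁻¹ * (σ 0 * x) := by
    intro x
    have hb : Commute (σ 0) ((sh (sh b))⁻¹) :=
      Commute.inv_right (comm_sh2 b)
    rw [← mul_assoc, hb.eq, mul_assoc]
  have cbr : ∀ x : B, σ 0 * (sh (σ 0) * (σ 0 * x)) =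
      sh (σ 0) * (σ 0 * (sh (σ 0) * x)) := by
    intro x
    have h : σ 0 * sh (σ 0) * σ 0 = sh (σ 0) * σ 0 * sh (σ 0) := by
      rw [sh_σ]; exact braid_rel 0
    calc σ 0 * (sh (σ 0) * (σ 0 * x)) = (σ 0 * sh (σ 0) * σ 0) * x := by
          simp [mul_assoc]
    _ = (sh (σ 0) * σ 0 * sh (σ 0)) * x := by rw [h]
    _ = sh (σ 0) * (σ 0 * (sh (σ 0) * x)) := by simp [mul_assoc]
  have expand : op a (op b c) =
      a * (sh b * sh (sh c) * sh (σ 0) * (sh (sh b))⁻¹) * σ 0 * (sh a)⁻¹ := by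
    unfold op
    simp only [_root_.map_mul, _root_.map_inv]
  have expand2 : op (op a b) (op a c) =
      (a * sh b * σ 0 * (sh a)⁻¹) * (sh a * sh (sh c) * sh (σ 0) * (sh (sh a))⁻¹)
        * σ 0 * (sh (sh a) * (sh (σ 0))⁻¹ * (sh (sh b))⁻¹ * (sh a)⁻¹) := by
    unfold op
    simp only [_root_.map_mul, _root_.map_inv, mul_inv_rev]
    group
  rw [expand, expand2]
  exact (grp_ld a (sh b) (sh (sh c)) (σ 0) (sh (σ 0)) (sh (sh a)) (sh (sh b))
    (sh a) (c1 c) c2 c3 cbr).symm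

/-- Evaluation of terms in the braid group. -/
def bev : W → B
  | .one => 1
  | .mul u v => op (bev u) (bev v)

theorem bev_ldeq {s t : W} (h : LDEq s t) : bev s = bev t := by
  induction h with
  | refl a => rfl
  | symm _ ih => exact ih.symm
  | trans _ _ ih1 ih2 => exact ih1.trans ih2
  | congr _ _ ih1 ih2 => show op _ _ = op _ _; rw [ih1, ih2]
  | ld a b c => exact op_ld (bev a) (bev b) (bev c)

/-- σ₀-positive elements of `B`. -/
inductive SigmaPos : B → Prop
  | base (u v : B) : SigmaPos (sh u * (σ 0 * sh v))
  | step (p c d : B) : SigmaPos p → SigmaPos (p * (sh c * (σ 0 * sh d)))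

theorem fold_pos (a : W) (l : List W) (hl : l ≠ []) :
    ∃ p, SigmaPos p ∧ bev (l.foldl W.mul a) = bev a * p := by
  induction l using List.reverseRecOn with
  | nil => exact absurd rfl hl
  | append_singleton l c ih =>
    rcases eq_or_ne l [] with rfl | hne
    · refine ⟨sh (bev c) * (σ 0 * sh ((bev a)⁻¹)), SigmaPos.base _ _, ?_⟩
      show op (bev a) (bev c) = _
      unfold op
      simp [mul_assoc, _root_.map_inv]
    · obtain ⟨p, hp, he⟩ := ih hne
      refine ⟨p * (sh (bev c) * (σ 0 * sh ((bev a * p)⁻¹))), SigmaPos.step _ _ _ hp, ?_⟩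
      rw [List.foldl_append]
      show op (bev (l.foldl W.mul a)) (bev c) = _
      rw [he]
      unfold op
      simp [mul_assoc, _root_.map_inv]

end LDP
namespace LDP
namespace FW

abbrev F := FreeGroup ℕ
abbrev Letter := (ℕ × Bool)

/-- A word is reduced iff no adjacent pair cancels. -/
def Reduced (w : List Letter) : Prop :=
  List.Chain' (fun a b => ¬(a.1 = b.1 ∧ a.2 = !b.2)) w

theorem Reduced.tail {x : Letter} {w : List Letter} (h : Reduced (x :: w)) : Reduced w :=
  (List.isChain_cons.mp h).2

theorem reduce_eq_self {w : List Letter} (h : Reduced w) : FreeGroup.reduce w = w := by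
  induction w with
  | nil => rfl
  | cons x w ih =>
    rw [FreeGroup.reduce.cons, ih h.tail]
    cases w with
    | nil => rfl
    | cons y t =>
      have hxy : ¬(x.1 = y.1 ∧ x.2 = !y.2) := (List.isChain_cons_cons.mp h).1
      show (if x.1 = y.1 ∧ x.2 = !y.2 then t else x :: y :: t) = x :: y :: t
      rw [if_neg hxy]

theorem reduced_reduce (w : List Letter) : Reduced (FreeGroup.reduce w) := by
  induction w with
  | nil => exact List.isChain_nil
  | cons x w ih =>
    rw [FreeGroup.reduce.cons]
    rcases hE : FreeGroup.reduce w with _ | ⟨hd, tl⟩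
    · exact List.isChain_singleton x
    · rw [hE] at ih
      show Reduced (if x.1 = hd.1 ∧ x.2 = !hd.2 then tl else x :: hd :: tl)
      split_ifs with hc
      · exact ih.tail
      · exact List.isChain_cons_cons.mpr ⟨hc, ih⟩

theorem mem_reduce {w : List Letter} {l : Letter} (h : l ∈ FreeGroup.reduce w) : l ∈ w := by
  induction w with
  | nil => simpa using h
  | cons x w ih =>
    rw [FreeGroup.reduce.cons] at h
    rcases hE : FreeGroup.reduce w with _ | ⟨hd, tl⟩
    · rw [hE] at h
      simp at h
      simp [h]
    · rw [hE] at h ih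
      revert h
      show l ∈ (if x.1 = hd.1 ∧ x.2 = !hd.2 then tl else x :: hd :: tl) → _
      split_ifs with hc
      · intro h
        exact List.mem_cons_of_mem x (ih (List.mem_cons_of_mem hd h))
      · intro h
        rcases List.mem_cons.mp h with rfl | h
        · exact List.mem_cons_self
        · exact List.mem_cons_of_mem x (ih h)

theorem toWord_eq {w : List Letter} {g : F} (h : Reduced w) (he : FreeGroup.mk w = g) :
    g.toWord = w := by
  subst he
  rw [FreeGroup.toWord_mk, reduce_eq_self h]

theorem reduced_toWord (g : F) : Reduced g.toWord := by
  rw [← FreeGroup.reduce_toWord]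
  exact reduced_reduce _

theorem mk_eq_one_iff {w : List Letter} (h : Reduced w) : FreeGroup.mk w = 1 ↔ w = [] := by
  constructor
  · intro he
    have := toWord_eq h he
    rw [FreeGroup.toWord_one] at this
    exact this.symm
  · rintro rfl
    rfl

/-- `mk` of a word as a product of generators. -/
theorem mk_eq_prod (w : List Letter) :
    FreeGroup.mk w =
      (w.map (fun l => cond l.2 (FreeGroup.of l.1) (FreeGroup.of l.1)⁻¹)).prod := by
  conv_lhs => rw [← FreeGroup.lift_of_apply (FreeGroup.mk w)]
  rw [FreeGroup.lift_mk]

/-- Words with all letters having index in `S`. -/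
def NS (S : Set ℕ) (g : F) : Prop := ∀ l ∈ g.toWord, l.1 ∈ S

theorem ns_iff_closure {S : Set ℕ} {g : F} :
    NS S g ↔ g ∈ Subgroup.closure (FreeGroup.of '' S) := by
  constructor
  · intro h
    have : FreeGroup.mk g.toWord = g := FreeGroup.mk_toWord
    rw [← this, mk_eq_prod]
    apply list_prod_mem
    intro x hx
    obtain ⟨l, hl, rfl⟩ := List.mem_map.mp hx
    have hS : l.1 ∈ S := h l hl
    have hof : FreeGroup.of l.1 ∈ Subgroup.closure (FreeGroup.of '' S) :=
      Subgroup.subset_closure ⟨l.1, hS, rfl⟩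
    cases l.2
    · simpa using inv_mem hof
    · simpa using hof
  · intro h
    induction h using Subgroup.closure_induction with
    | mem x hx =>
      obtain ⟨i, hi, rfl⟩ := hx
      intro l hl
      rw [FreeGroup.toWord_of, List.mem_singleton] at hl
      subst hl
      exact hi
    | one =>
      intro l hl
      rw [FreeGroup.toWord_one] at hl
      simp at hl
    | mul x y _ _ ihx ihy =>
      intro l hl
      have := (FreeGroup.toWord_mul_sublist x y).subset hl
      rcases List.mem_append.mp this with h | h
      · exact ihx l h
      · exact ihy l h
    | inv x _ ihx =>
      intro l hl
      rw [FreeGroup.toWord_inv] at hl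
      unfold FreeGroup.invRev at hl
      rw [List.mem_reverse, List.mem_map] at hl
      obtain ⟨m, hm, rfl⟩ := hl
      exact ihx m hm

/-- Flatten an alternation of pivot letters and blocks. -/
def flat (L : List (Letter × List Letter)) : List Letter :=
  L.flatMap fun x => x.1 :: x.2

@[simp] theorem flat_nil : flat [] = [] := rfl

@[simp] theorem flat_cons (a : Letter × List Letter) (L : List (Letter × List Letter)) :
    flat (a :: L) = a.1 :: a.2 ++ flat L := rfl

@[simp] theorem flat_append (L1 L2 : List (Letter × List Letter)) :
    flat (L1 ++ L2) = flat L1 ++ flat L2 := by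
  simp [flat]

theorem flat_ne_nil {L : List (Letter × List Letter)} (h : L ≠ []) : flat L ≠ [] := by
  cases L with
  | nil => exact absurd rfl h
  | cons a L => simp

theorem mk_flat (L : List (Letter × List Letter)) :
    FreeGroup.mk (flat L) =
      (L.map (fun x => FreeGroup.mk [x.1] * FreeGroup.mk x.2)).prod := by
  induction L with
  | nil => rfl
  | cons a L ih =>
    rw [flat_cons, List.map_cons, List.prod_cons, ← ih]
    rw [FreeGroup.mul_mk, FreeGroup.mul_mk]
    simp

/-- Gluing lemma: an alternation of `p`-pivots and reduced `p`-free blocks is reduced. -/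
theorem glue_reduced (p : ℕ) (L : List (Letter × List Letter))
    (hL : ∀ x ∈ L, x.1.1 = p ∧ (∀ m ∈ x.2, m.1 ≠ p) ∧ Reduced x.2)
    (hch : L.Chain' (fun x y => x.2 ≠ [] ∨ x.1.2 = y.1.2)) :
    Reduced (flat L) ∧ (flat L).head? = L.head?.map (·.1) := by
  induction L with
  | nil => exact ⟨List.isChain_nil, rfl⟩
  | cons a L ih =>
    obtain ⟨hp, hnp, hred⟩ := hL a (List.mem_cons_self)
    obtain ⟨ihr, ihh⟩ := ih (fun x hx => hL x (List.mem_cons_of_mem a hx)) hch.tail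
    have hbd : ∀ y ∈ (flat L).head?, y.1 = p := by
      intro y hy
      rw [ihh] at hy
      cases L with
      | nil => simp at hy
      | cons b L' =>
        simp at hy
        rw [← hy]
        exact (hL b (List.mem_cons_of_mem a (List.mem_cons_self))).1
    refine ⟨?_, by simp⟩
    rw [flat_cons]
    refine List.isChain_cons.mpr ?_
    constructor
    · intro y hy
      cases hb : a.2 with
      | nil =>
        rw [hb] at hy
        simp at hy
        have hyp : y.1 = p := hbd y hy
        -- chain condition: a.2 = [] so bools equal with next pivot
        cases L with
        | nil => simp [flat] at hy
        | cons b L' =>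
          have hc := List.isChain_cons_cons.mp hch |>.1
          rcases hc with hne | hbe
          · exact absurd hb hne
          · have hyb : b.1 = y := by
              rw [ihh] at hy
              simpa using hy
            rintro ⟨h1, h2⟩
            rw [← hyb] at h2
            rw [hbe] at h2
            simp at h2
      | cons m t =>
        rw [hb] at hy
        simp at hy
        subst hy
        rintro ⟨h1, _⟩
        exact (hnp m (by rw [hb]; exact List.mem_cons_self)) (by rw [← h1]; exact hp)
    · show List.Chain' _ (a.2 ++ flat L)
      unfold List.Chain'; rw [List.isChain_append]
      refine ⟨hred, ihr, ?_⟩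
      intro x hx y hy
      rintro ⟨h1, _⟩
      have : x.1 ≠ p := hnp x (List.mem_of_mem_getLast? hx)
      exact this (by rw [h1, hbd y hy])

/-- Decompose a word at pivot index `p`. -/
def decomp (p : ℕ) : List Letter → List Letter × List (Letter × List Letter)
  | [] => ([], [])
  | l :: w =>
    let r := decomp p w
    if l.1 = p then ([], (l, r.1) :: r.2) else (l :: r.1, r.2)

theorem decomp_spec (p : ℕ) (w : List Letter) (hw : Reduced w) :
    (decomp p w).1 ++ flat (decomp p w).2 = w ∧
    (∀ m ∈ (decomp p w).1, m.1 ≠ p) ∧ Reduced (decomp p w).1 ∧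
    (∀ x ∈ (decomp p w).2, x.1.1 = p ∧ (∀ m ∈ x.2, m.1 ≠ p) ∧ Reduced x.2) ∧
    (decomp p w).2.Chain' (fun x y => x.2 ≠ [] ∨ x.1.2 = y.1.2) := by
  induction w with
  | nil =>
    exact ⟨rfl, fun m hm => absurd hm (List.not_mem_nil), List.isChain_nil,
      fun x hx => absurd hx (List.not_mem_nil), List.isChain_nil⟩
  | cons l w ih =>
    obtain ⟨ih1, ih2, ih3, ih4, ih5⟩ := ih hw.tail
    by_cases hl : l.1 = p
    · have hd : decomp p (l :: w) = ([], (l, (decomp p w).1) :: (decomp p w).2) := by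
        simp [decomp, hl]
      rw [hd]
      refine ⟨by simpa using ih1, by simp, List.isChain_nil, ?_, ?_⟩
      · intro x hx
        rcases List.mem_cons.mp hx with rfl | hx
        · exact ⟨hl, ih2, ih3⟩
        · exact ih4 x hx
      · unfold List.Chain'; rw [List.isChain_cons]
        refine ⟨?_, ih5⟩
        intro y hy'
        have hy : y ∈ (decomp p w).2 := List.mem_of_mem_head? hy'
        by_cases hb : (decomp p w).1 = []
        · right
          -- w = flat L starts with pivot y.1
          have hw1 : w.head? = some y.1 := by
            rw [← ih1, hb, List.nil_append]
            cases hL : (decomp p w).2 with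
            | nil => rw [hL] at hy'; simp at hy'
            | cons b L' =>
              rw [hL] at hy'
              simp at hy'
              rw [← hy']
              simp [flat]
          cases w with
          | nil => simp at hw1
          | cons m t =>
            have : m = y.1 := by simpa using hw1
            have hc : ¬(l.1 = m.1 ∧ l.2 = !m.2) := (List.isChain_cons_cons.mp hw).1
            subst this
            by_contra hne
            exact hc ⟨by rw [hl, (ih4 y hy).1], by
              rcases Bool.eq_false_or_eq_true y.1.2 with h | h <;>
                rcases Bool.eq_false_or_eq_true l.2 with h' | h' <;>
                  simp_all⟩
        · exact Or.inl hb
    · have hd : decomp p (l :: w) = (l :: (decomp p w).1, (decomp p w).2) := by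
        simp [decomp, hl]
      rw [hd]
      refine ⟨by simpa using ih1, ?_, ?_, ih4, ih5⟩
      · intro m hm
        rcases List.mem_cons.mp hm with rfl | hm
        · exact hl
        · exact ih2 m hm
      · rw [Reduced]; unfold List.Chain'; rw [List.isChain_cons]
        refine ⟨?_, ih3⟩
        intro y hy
        cases hb : (decomp p w).1 with
        | nil => rw [hb] at hy; simp at hy
        | cons m t =>
          rw [hb] at hy
          simp at hy
          have hw1 : w.head? = some m := by
            rw [← ih1, hb]
            simp
          cases w with
          | nil => simp at hw1
          | cons m' t' =>
            have : m' = m := by simpa using hw1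
            subst this
            rw [← hy]
            exact (List.isChain_cons_cons.mp hw).1

end FW
end LDP
namespace LDP
namespace FW

def artinF (i : ℕ) : ℕ → F := fun j =>
  if j = i then FreeGroup.of i * FreeGroup.of (i+1) * (FreeGroup.of i)⁻¹
  else if j = i + 1 then FreeGroup.of i
  else FreeGroup.of j

def artinG (i : ℕ) : ℕ → F := fun j =>
  if j = i then FreeGroup.of (i+1)
  else if j = i + 1 then (FreeGroup.of (i+1))⁻¹ * FreeGroup.of i * FreeGroup.of (i+1)
  else FreeGroup.of j

def artinHom (i : ℕ) : F →* F := FreeGroup.lift (artinF i)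
def artinInvHom (i : ℕ) : F →* F := FreeGroup.lift (artinG i)

theorem artinF_self (i : ℕ) :
    artinF i i = FreeGroup.of i * FreeGroup.of (i+1) * (FreeGroup.of i)⁻¹ := by
  simp [artinF]

theorem artinF_succ (i : ℕ) : artinF i (i+1) = FreeGroup.of i := by
  simp [artinF]

theorem artinF_other {i j : ℕ} (h1 : j ≠ i) (h2 : j ≠ i + 1) :
    artinF i j = FreeGroup.of j := by
  simp [artinF, h1, h2]

theorem artinG_self (i : ℕ) : artinG i i = FreeGroup.of (i+1) := by
  simp [artinG]

theorem artinG_succ (i : ℕ) :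
    artinG i (i+1) = (FreeGroup.of (i+1))⁻¹ * FreeGroup.of i * FreeGroup.of (i+1) := by
  simp [artinG]

theorem artinG_other {i j : ℕ} (h1 : j ≠ i) (h2 : j ≠ i + 1) :
    artinG i j = FreeGroup.of j := by
  simp [artinG, h1, h2]

theorem comp1_gen (i j : ℕ) :
    artinInvHom i (artinHom i (FreeGroup.of j)) = FreeGroup.of j := by
  rcases eq_or_ne j i with rfl | h1
  · rw [artinHom, FreeGroup.lift_apply_of, artinF_self]
    simp only [_root_.map_mul, _root_.map_inv, artinInvHom, FreeGroup.lift_apply_of,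
      artinG_self, artinG_succ]
    group
  · rcases eq_or_ne j (i+1) with rfl | h2
    · rw [artinHom, FreeGroup.lift_apply_of, artinF_succ, artinInvHom, FreeGroup.lift_apply_of,
        artinG_self]
    · rw [artinHom, FreeGroup.lift_apply_of, artinF_other h1 h2, artinInvHom,
        FreeGroup.lift_apply_of, artinG_other h1 h2]

theorem comp2_gen (i j : ℕ) :
    artinHom i (artinInvHom i (FreeGroup.of j)) = FreeGroup.of j := by
  rcases eq_or_ne j i with rfl | h1
  · rw [artinInvHom, FreeGroup.lift_apply_of, artinG_self, artinHom, FreeGroup.lift_apply_of,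
      artinF_succ]
  · rcases eq_or_ne j (i+1) with rfl | h2
    · rw [artinInvHom, FreeGroup.lift_apply_of, artinG_succ]
      simp only [_root_.map_mul, _root_.map_inv, artinHom, FreeGroup.lift_apply_of,
        artinF_self, artinF_succ]
      group
    · rw [artinInvHom, FreeGroup.lift_apply_of, artinG_other h1 h2, artinHom,
        FreeGroup.lift_apply_of, artinF_other h1 h2]

theorem artin_comp1 (i : ℕ) : (artinInvHom i).comp (artinHom i) = MonoidHom.id F := by
  ext j
  exact comp1_gen i j

theorem artin_comp2 (i : ℕ) : (artinHom i).comp (artinInvHom i) = MonoidHom.id F := by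
  ext j
  exact comp2_gen i j

/-- The Artin generator automorphism of the free group. -/
def artin (i : ℕ) : MulAut F :=
  { toFun := artinHom i
    invFun := artinInvHom i
    left_inv := fun x => DFunLike.congr_fun (artin_comp1 i) x
    right_inv := fun x => DFunLike.congr_fun (artin_comp2 i) x
    map_mul' := _root_.map_mul (artinHom i) }

@[simp] theorem artin_apply (i : ℕ) (x : F) : artin i x = artinHom i x := rfl

@[simp] theorem artin_symm_apply (i : ℕ) (x : F) : (artin i).symm x = artinInvHom i x := rfl

theorem mulAut_ext {e1 e2 : MulAut F}
    (h : ∀ j, e1 (FreeGroup.of j) = e2 (FreeGroup.of j)) : e1 = e2 := by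
  apply MulEquiv.toMonoidHom_injective
  ext j
  exact h j

theorem artin_fix {i j : ℕ} (h1 : j ≠ i) (h2 : j ≠ i + 1) :
    artin i (FreeGroup.of j) = FreeGroup.of j := by
  rw [artin_apply, artinHom, FreeGroup.lift_apply_of, artinF_other h1 h2]

@[simp] theorem a_self (i : ℕ) :
    artin i (FreeGroup.of i) = FreeGroup.of i * FreeGroup.of (i+1) * (FreeGroup.of i)⁻¹ := by
  rw [artin_apply, artinHom, FreeGroup.lift_apply_of, artinF_self]

@[simp] theorem a_succ (i : ℕ) : artin i (FreeGroup.of (i+1)) = FreeGroup.of i := by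
  rw [artin_apply, artinHom, FreeGroup.lift_apply_of, artinF_succ]

theorem a_other {i j : ℕ} (h1 : j ≠ i) (h2 : j ≠ i + 1) :
    artin i (FreeGroup.of j) = FreeGroup.of j := by
  rw [artin_apply, artinHom, FreeGroup.lift_apply_of, artinF_other h1 h2]

theorem artin_braid (i : ℕ) :
    artin i * artin (i+1) * artin i = artin (i+1) * artin i * artin (i+1) := by
  have e1 := a_other (i := i+1) (j := i) (by omega) (by omega)
  have e2 := a_other (i := i) (j := i+1+1) (by omega) (by omega)
  apply mulAut_ext
  intro j
  simp only [MulAut.mul_apply]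
  rcases eq_or_ne j i with h | h1
  · rw [h]
    simp only [_root_.map_mul, _root_.map_inv, a_self, a_succ, e1, e2]
    try group
  · rcases eq_or_ne j (i+1) with h | h2
    · rw [h]
      simp only [_root_.map_mul, _root_.map_inv, a_self, a_succ, e1, e2]
      try group
    · rcases eq_or_ne j (i+1+1) with h | h3
      · rw [h]
        simp only [_root_.map_mul, _root_.map_inv, a_self, a_succ, e1, e2]
        try group
      · simp only [a_other (i := i) (j := j) h1 h2,
          a_other (i := i+1) (j := j) h2 h3]

theorem artin_comm {i j : ℕ} (hij : i + 2 ≤ j) :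
    artin i * artin j = artin j * artin i := by
  have e1 := a_other (i := j) (j := i) (by omega) (by omega)
  have e2 := a_other (i := j) (j := i+1) (by omega) (by omega)
  have e3 := a_other (i := i) (j := j) (by omega) (by omega)
  have e4 := a_other (i := i) (j := j+1) (by omega) (by omega)
  apply mulAut_ext
  intro k
  simp only [MulAut.mul_apply]
  rcases eq_or_ne k i with h | h1
  · rw [h]
    simp only [_root_.map_mul, _root_.map_inv, a_self, a_succ, e1, e2, e3, e4]
  · rcases eq_or_ne k (i+1) with h | h2
    · rw [h]
      simp only [_root_.map_mul, _root_.map_inv, a_self, a_succ, e1, e2, e3, e4]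
    · rcases eq_or_ne k j with h | h3
      · rw [h]
        simp only [_root_.map_mul, _root_.map_inv, a_self, a_succ, e1, e2, e3, e4]
      · rcases eq_or_ne k (j+1) with h | h4
        · rw [h]
          simp only [_root_.map_mul, _root_.map_inv, a_self, a_succ, e1, e2, e3, e4]
        · simp only [a_other (i := j) (j := k) h3 h4,
            a_other (i := i) (j := k) h1 h2]

/-- The Artin action of the braid group on the free group. -/
def A : B →* MulAut F :=
  PresentedGroup.toGroup (f := artin) (by
    rintro r (⟨i, rfl⟩ | ⟨i, j, hij, rfl⟩)
    · rw [brel1]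
      simp only [_root_.map_mul, _root_.map_inv, FreeGroup.lift_apply_of]
      rw [mul_inv_eq_one]
      exact artin_braid i
    · rw [brel2]
      simp only [_root_.map_mul, _root_.map_inv, FreeGroup.lift_apply_of]
      rw [mul_inv_eq_one]
      exact artin_comm hij)

@[simp] theorem A_σ (i : ℕ) : A (σ i) = artin i :=
  PresentedGroup.toGroup.of (f := artin) _

/-- Indices distinct from a given one. -/
def So (p : ℕ) : Set ℕ := {i | i ≠ p}

/-- Automorphisms suitable for the invariant: they fix `x₀` and preserve
`0`-free elements, in both directions. -/
def Good (e : MulAut F) : Prop :=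
  e (FreeGroup.of 0) = FreeGroup.of 0 ∧ e⁻¹ (FreeGroup.of 0) = FreeGroup.of 0 ∧
  (∀ g, NS (So 0) g → NS (So 0) (e g)) ∧ (∀ g, NS (So 0) g → NS (So 0) (e⁻¹ g))

def GoodSub : Subgroup (MulAut F) where
  carrier := {e | Good e}
  one_mem' := ⟨rfl, by simp, fun g hg => hg, fun g hg => by simpa using hg⟩
  mul_mem' := by
    rintro e1 e2 ⟨h1, h2, h3, h4⟩ ⟨h5, h6, h7, h8⟩
    refine ⟨by rw [MulAut.mul_apply, h5, h1], ?_, ?_, ?_⟩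
    · rw [mul_inv_rev, MulAut.mul_apply, h2, h6]
    · intro g hg
      rw [MulAut.mul_apply]
      exact h3 _ (h7 _ hg)
    · intro g hg
      rw [mul_inv_rev, MulAut.mul_apply]
      exact h8 _ (h4 _ hg)
  inv_mem' := by
    rintro e ⟨h1, h2, h3, h4⟩
    exact ⟨h2, by simpa using h1, h4, by simpa using h3⟩

theorem ns_hom_preserve {S T : Set ℕ} {φ : F →* F}
    (h : ∀ i ∈ S, NS T (φ (FreeGroup.of i))) : ∀ g, NS S g → NS T (φ g) := by
  intro g hg
  rw [ns_iff_closure] at hg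
  rw [ns_iff_closure]
  induction hg using Subgroup.closure_induction with
  | mem x hx =>
    obtain ⟨i, hi, rfl⟩ := hx
    rw [← ns_iff_closure]
    exact h i hi
  | one => rw [_root_.map_one]; exact one_mem _
  | mul x y _ _ ihx ihy => rw [_root_.map_mul]; exact mul_mem ihx ihy
  | inv x _ ihx => rw [_root_.map_inv]; exact inv_mem ihx

theorem ns_of {S : Set ℕ} {i : ℕ} (h : i ∈ S) : NS S (FreeGroup.of i) := by
  rw [ns_iff_closure]
  exact Subgroup.subset_closure ⟨i, h, rfl⟩

theorem NS.mul {S : Set ℕ} {g h : F} (hg : NS S g) (hh : NS S h) : NS S (g * h) := by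
  rw [ns_iff_closure] at hg hh ⊢
  exact mul_mem hg hh

theorem NS.inv {S : Set ℕ} {g : F} (hg : NS S g) : NS S g⁻¹ := by
  rw [ns_iff_closure] at hg ⊢
  exact inv_mem hg

theorem good_artin (j : ℕ) : Good (artin (j+1)) := by
  refine ⟨artin_fix (by omega) (by omega), ?_, ?_, ?_⟩
  · show artinInvHom (j+1) (FreeGroup.of 0) = FreeGroup.of 0
    rw [artinInvHom, FreeGroup.lift_apply_of, artinG_other (by omega) (by omega)]
  · apply ns_hom_preserve (φ := artinHom (j+1))
    intro i hi
    rw [artinHom, FreeGroup.lift_apply_of]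
    rcases eq_or_ne i (j+1) with rfl | h1
    · rw [artinF_self]
      exact ((ns_of (by simp [So])).mul (ns_of (by simp [So]))).mul
        (ns_of (S := So 0) (by simp [So])).inv
    · rcases eq_or_ne i (j+2) with rfl | h2
      · rw [artinF_succ]
        exact ns_of (by simp [So])
      · rw [artinF_other h1 h2]
        exact ns_of hi
  · apply ns_hom_preserve (φ := artinInvHom (j+1))
    intro i hi
    rw [artinInvHom, FreeGroup.lift_apply_of]
    rcases eq_or_ne i (j+1) with rfl | h1
    · rw [artinG_self]
      exact ns_of (by simp [So])
    · rcases eq_or_ne i (j+2) with rfl | h2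
      · rw [artinG_succ]
        exact ((ns_of (S := So 0) (by simp [So])).inv.mul (ns_of (by simp [So]))).mul
          (ns_of (by simp [So]))
      · rw [artinG_other h1 h2]
        exact ns_of hi

theorem good_a_sh (u : B) : Good (A (sh u)) := by
  have key : u ∈ Subgroup.comap (A.comp sh) GoodSub := by
    apply PresentedGroup.generated_by
    intro i
    simp only [Subgroup.mem_comap, MonoidHom.comp_apply]
    show A (sh (σ i)) ∈ GoodSub
    rw [sh_σ, A_σ]
    exact good_artin i
  exact key

end FW
end LDP
namespace LDP
namespace FW

/-- The invariant: reduced word begins with `x₀` and ends with `x₀⁻¹`. -/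
def Inv (g : F) : Prop :=
  g.toWord.head? = some ((0:ℕ), true) ∧ g.toWord.getLast? = some ((0:ℕ), false)

theorem not_inv_of0 : ¬ Inv (FreeGroup.of (0:ℕ)) := by
  rintro ⟨h1, h2⟩
  rw [FreeGroup.toWord_of] at h2
  simp at h2

theorem mk_true (i : ℕ) : FreeGroup.mk [(i, true)] = FreeGroup.of i := rfl

theorem mk_false (i : ℕ) : FreeGroup.mk [(i, false)] = (FreeGroup.of i)⁻¹ := by
  rw [show (FreeGroup.of i) = FreeGroup.mk [(i, true)] from rfl, FreeGroup.inv_mk]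
  rfl

theorem chain'_map_strong {α β : Type*} {R : α → α → Prop} {S : β → β → Prop}
    {P : α → Prop} (f : α → β) {l : List α} (hP : ∀ x ∈ l, P x) (h : l.Chain' R)
    (himp : ∀ x y, P x → P y → R x y → S (f x) (f y)) : (l.map f).Chain' S := by
  induction l with
  | nil => exact List.isChain_nil
  | cons a l ih =>
    cases l with
    | nil => simp [List.Chain']
    | cons b t =>
      unfold List.Chain'; rw [List.map_cons, List.map_cons, List.isChain_cons_cons]
      obtain ⟨hab, hrest⟩ := List.isChain_cons_cons.mp h
      refine ⟨himp a b (hP a (by simp)) (hP b (by simp)) hab, ?_⟩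
      rw [← List.map_cons]
      exact ih (fun x hx => hP x (List.mem_cons_of_mem a hx)) hrest

theorem conj_prod {G : Type*} [Group G] (z : G) (l : List (G × G)) :
    (l.map (fun q => z * q.1 * z⁻¹ * q.2)).prod =
      z * (l.map (fun q => q.1 * (z⁻¹ * q.2 * z))).prod * z⁻¹ := by
  induction l with
  | nil => simp
  | cons a l ih =>
    rw [List.map_cons, List.map_cons, List.prod_cons, List.prod_cons, ih]
    group

/-- Structure extraction for an invariant element. -/
theorem inv_structure {g : F} (h : Inv g) :
    ∃ L : List (Letter × List Letter), flat L = g.toWord ∧ L ≠ [] ∧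
      (∀ x ∈ L, x.1.1 = 0 ∧ (∀ m ∈ x.2, m.1 ≠ 0) ∧ Reduced x.2) ∧
      L.Chain' (fun x y => x.2 ≠ [] ∨ x.1.2 = y.1.2) ∧
      L.head?.map (·.1) = some ((0:ℕ), true) ∧
      L.getLast? = some ((((0:ℕ), false) : Letter), ([] : List Letter)) := by
  obtain ⟨h1, h2, _h3, h4, h5⟩ := decomp_spec 0 g.toWord (reduced_toWord g)
  have hb0 : (decomp 0 g.toWord).1 = [] := by
    cases hD : (decomp 0 g.toWord).1 with
    | nil => rfl
    | cons m t =>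
      exfalso
      have hm : g.toWord.head? = some m := by
        rw [← h1, hD]
        simp
      rw [h.1] at hm
      have hm' : m = ((0:ℕ), true) := (Option.some.inj hm).symm
      have := h2 m (by rw [hD]; exact List.mem_cons_self)
      rw [hm'] at this
      exact this rfl
  have hfl : flat (decomp 0 g.toWord).2 = g.toWord := by
    conv_rhs => rw [← h1, hb0, List.nil_append]
  have hLne : (decomp 0 g.toWord).2 ≠ [] := by
    intro hnil
    rw [hnil] at hfl
    have : g.toWord.head? = none := by rw [← hfl]; rfl
    rw [h.1] at this
    simp at this
  refine ⟨(decomp 0 g.toWord).2, hfl, hLne, h4, h5, ?_, ?_⟩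
  · cases hL : (decomp 0 g.toWord).2 with
    | nil => exact absurd hL hLne
    | cons x L' =>
      have hhd : g.toWord.head? = some x.1 := by
        rw [← hfl, hL]
        simp
      rw [h.1] at hhd
      have hh : x.1 = ((0:ℕ), true) := (Option.some.inj hhd).symm
      simp [hh]
  · rcases List.eq_nil_or_concat (decomp 0 g.toWord).2 with hnil | ⟨L0, x, hcc⟩
    · exact absurd hnil hLne
    · have hgl : g.toWord.getLast? = (x.1 :: x.2).getLast? := by
        rw [← hfl, hcc, List.concat_eq_append, flat_append]
        show (flat L0 ++ (x.1 :: x.2 ++ flat [])).getLast? = _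
        rw [List.getLast?_append]
        rw [show (x.1 :: x.2 ++ flat []) = x.1 :: x.2 by simp [flat]]
        cases hc : (x.1 :: x.2).getLast? with
        | none => simp at hc
        | some y => rfl
      have hx2 : x.2 = [] := by
        cases hx2c : x.2 with
        | nil => rfl
        | cons m t =>
          exfalso
          rw [hx2c, List.getLast?_cons_cons] at hgl
          cases hml : (m :: t).getLast? with
          | none => simp at hml
          | some mm =>
            rw [hml] at hgl
            rw [h.2] at hgl
            have hmm : mm = ((0:ℕ), false) := Option.some.inj hgl.symm
            have hmem : mm ∈ x.2 := by
              rw [hx2c]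
              exact List.mem_of_mem_getLast? hml
            have := (h4 x (by rw [hcc]; simp)).2.1 mm hmem
            rw [hmm] at this
            exact this rfl
      rw [hx2, List.getLast?_singleton] at hgl
      rw [h.2] at hgl
      have hx1 : x.1 = ((0:ℕ), false) := Option.some.inj hgl.symm
      rw [hcc, List.concat_eq_append, List.getLast?_concat]
      rw [show x = ((((0:ℕ), false) : Letter), ([] : List Letter)) from
        Prod.ext hx1 hx2]

end FW
end LDP
namespace LDP
namespace FW

/-- Good automorphisms preserve the invariant. -/
theorem good_inv {e : MulAut F} (he : Good e) {g : F} (h : Inv g) : Inv (e g) := by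
  obtain ⟨L, hfl, hne, hall, hch, hhd, hlast⟩ := inv_structure h
  obtain ⟨he0, _he0', hens, _hens'⟩ := he
  have hFred : ∀ b : List Letter, Reduced ((e (FreeGroup.mk b)).toWord) :=
    fun b => reduced_toWord _
  have hFnz : ∀ b : List Letter, (∀ m ∈ b, m.1 ≠ 0) → Reduced b →
      ∀ m ∈ (e (FreeGroup.mk b)).toWord, m.1 ≠ 0 := by
    intro b hb hbred m hm
    have h1 : NS (So 0) (FreeGroup.mk b) := by
      intro l hl
      rw [toWord_eq hbred rfl] at hl
      exact hb l hl
    exact hens _ h1 m hm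
  have hFnil : ∀ b : List Letter, Reduced b →
      (((e (FreeGroup.mk b)).toWord = []) ↔ b = []) := by
    intro b hbred
    rw [FreeGroup.toWord_eq_nil_iff]
    constructor
    · intro h1
      have h2 : FreeGroup.mk b = 1 := by
        have := congrArg e.symm h1
        simpa using this
      exact (mk_eq_one_iff hbred).mp h2
    · rintro rfl
      show e (FreeGroup.mk []) = 1
      rw [show FreeGroup.mk ([] : List Letter) = 1 from rfl, _root_.map_one]
  have hall2 : ∀ x ∈ L.map (fun x => (x.1, (e (FreeGroup.mk x.2)).toWord)),
      x.1.1 = 0 ∧ (∀ m ∈ x.2, m.1 ≠ 0) ∧ Reduced x.2 := by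
    intro x hx
    obtain ⟨y, hy, rfl⟩ := List.mem_map.mp hx
    obtain ⟨hy1, hy2, hy3⟩ := hall y hy
    exact ⟨hy1, hFnz y.2 hy2 hy3, hFred y.2⟩
  have hch2 : (L.map (fun x => (x.1, (e (FreeGroup.mk x.2)).toWord))).Chain'
      (fun x y => x.2 ≠ [] ∨ x.1.2 = y.1.2) := by
    refine chain'_map_strong _ hall hch ?_
    intro x y hx _hy hr
    rcases hr with hne' | hbe
    · exact Or.inl (fun hc => hne' ((hFnil x.2 hx.2.2).mp hc))
    · exact Or.inr hbe
  obtain ⟨hred2, hhd2⟩ :=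
    glue_reduced 0 (L.map (fun x => (x.1, (e (FreeGroup.mk x.2)).toWord))) hall2 hch2
  have hmk : FreeGroup.mk (flat (L.map (fun x => (x.1, (e (FreeGroup.mk x.2)).toWord))))
      = e g := by
    rw [mk_flat, List.map_map]
    have hpt : ∀ x ∈ L,
        ((fun y => FreeGroup.mk [y.1] * FreeGroup.mk y.2) ∘
          (fun x => (x.1, (e (FreeGroup.mk x.2)).toWord))) x
        = e (FreeGroup.mk [x.1] * FreeGroup.mk x.2) := by
      intro x hx
      show FreeGroup.mk [x.1] * FreeGroup.mk ((e (FreeGroup.mk x.2)).toWord) = _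
      rw [FreeGroup.mk_toWord, _root_.map_mul]
      congr 1
      have hx1 : x.1.1 = 0 := (hall x hx).1
      cases hb : x.1.2
      · rw [show x.1 = ((0:ℕ), false) from Prod.ext hx1 hb, mk_false, _root_.map_inv,
          he0]
      · rw [show x.1 = ((0:ℕ), true) from Prod.ext hx1 hb, mk_true, he0]
    rw [List.map_congr_left hpt]
    rw [show (fun x : Letter × List Letter => e (FreeGroup.mk [x.1] * FreeGroup.mk x.2))
        = (⇑e ∘ fun x : Letter × List Letter => FreeGroup.mk [x.1] * FreeGroup.mk x.2)
        from rfl]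
    rw [← List.map_map, ← map_list_prod, ← mk_flat, hfl, FreeGroup.mk_toWord]
  have htw : (e g).toWord = flat (L.map (fun x => (x.1, (e (FreeGroup.mk x.2)).toWord))) :=
    toWord_eq hred2 hmk
  constructor
  · rw [htw, hhd2]
    cases hL : L with
    | nil => exact absurd hL hne
    | cons x L' =>
      rw [hL] at hhd
      simp at hhd ⊢
      exact hhd
  · rw [htw]
    rcases List.eq_nil_or_concat L with rfl | ⟨L0, x, hcc⟩
    · exact absurd rfl hne
    · have hx : x = ((((0:ℕ), false) : Letter), ([] : List Letter)) := by
        rw [hcc, List.concat_eq_append, List.getLast?_concat] at hlast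
        exact Option.some.inj hlast
      rw [hcc, List.concat_eq_append, List.map_append, flat_append]
      have he1 : (e (FreeGroup.mk ([] : List Letter))).toWord = [] := by
        rw [show FreeGroup.mk ([] : List Letter) = 1 from rfl, _root_.map_one,
          FreeGroup.toWord_one]
      rw [List.getLast?_append]
      rw [hx]
      simp [flat, he1]

end FW
end LDP
namespace LDP
namespace FW

/-- Abbreviation for the conjugated block image under `artin 0`. -/
noncomputable def eb (b : List Letter) : List Letter :=
  ((FreeGroup.of 0)⁻¹ * artin 0 (FreeGroup.mk b) * FreeGroup.of 0).toWord

theorem artin0_ns {b : List Letter} (hb : ∀ m ∈ b, m.1 ≠ 0) (hbred : Reduced b) :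
    ∀ m ∈ eb b, m.1 ≠ 1 := by
  have h1 : NS (So 0) (FreeGroup.mk b) := by
    intro l hl
    rw [toWord_eq hbred rfl] at hl
    exact hb l hl
  have h2 : NS (So 1) (artin 0 (FreeGroup.mk b)) := by
    refine ns_hom_preserve (φ := artinHom 0) ?_ _ h1
    intro i hi
    rw [artinHom, FreeGroup.lift_apply_of]
    rcases eq_or_ne i 1 with rfl | h1'
    · rw [show artinF 0 1 = FreeGroup.of 0 from artinF_succ 0]
      exact ns_of (by simp [So])
    · rw [artinF_other hi h1']
      exact ns_of h1'
  have h3 : NS (So 1) ((FreeGroup.of 0)⁻¹ * artin 0 (FreeGroup.mk b) * FreeGroup.of 0) :=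
    ((ns_of (show (0:ℕ) ∈ So 1 by simp [So])).inv.mul h2).mul
      (ns_of (show (0:ℕ) ∈ So 1 by simp [So]))
  intro m hm
  exact h3 m hm

theorem eb_nil_iff {b : List Letter} (hbred : Reduced b) : eb b = [] ↔ b = [] := by
  rw [eb, FreeGroup.toWord_eq_nil_iff]
  constructor
  · intro h1
    have h2 : artin 0 (FreeGroup.mk b) = 1 := by
      have := congrArg (fun z => FreeGroup.of 0 * z * (FreeGroup.of 0)⁻¹) h1
      simpa [mul_assoc] using this
    have h3 : FreeGroup.mk b = 1 := (artin 0).injective (by rw [h2, _root_.map_one])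
    exact (mk_eq_one_iff hbred).mp h3
  · rintro rfl
    rw [show FreeGroup.mk ([] : List Letter) = 1 from rfl, _root_.map_one]
    group

theorem eb_nil : eb [] = [] := by
  rw [eb_nil_iff List.isChain_nil]

theorem artin0_inv {g : F} (h : Inv g) : Inv (artin 0 g) := by
  obtain ⟨L, hfl, hne, hall, hch, hhd, hlast⟩ := inv_structure h
  have hall1 : ∀ x ∈ L.map (fun x => ((((1:ℕ), x.1.2) : Letter), eb x.2)),
      x.1.1 = 1 ∧ (∀ m ∈ x.2, m.1 ≠ 1) ∧ Reduced x.2 := by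
    intro x hx
    obtain ⟨y, hy, rfl⟩ := List.mem_map.mp hx
    obtain ⟨_hy1, hy2, hy3⟩ := hall y hy
    exact ⟨rfl, artin0_ns hy2 hy3, reduced_toWord _⟩
  have hch1 : (L.map (fun x => ((((1:ℕ), x.1.2) : Letter), eb x.2))).Chain'
      (fun x y => x.2 ≠ [] ∨ x.1.2 = y.1.2) := by
    refine chain'_map_strong _ hall hch ?_
    intro x y hx _hy hr
    rcases hr with hne' | hbe
    · exact Or.inl (fun hc => hne' ((eb_nil_iff hx.2.2).mp hc))
    · exact Or.inr hbe
  obtain ⟨hred1, hhd1⟩ :=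
    glue_reduced 1 (L.map (fun x => ((((1:ℕ), x.1.2) : Letter), eb x.2))) hall1 hch1
  have hL1ne : L.map (fun x => ((((1:ℕ), x.1.2) : Letter), eb x.2)) ≠ [] := by
    simpa using hne
  obtain ⟨L0, x, hcc⟩ := (List.eq_nil_or_concat L).resolve_left hne
  have hx : x = ((((0:ℕ), false) : Letter), ([] : List Letter)) := by
    rw [hcc, List.concat_eq_append, List.getLast?_concat] at hlast
    exact Option.some.inj hlast
  have hlast1 : (flat (L.map (fun x => ((((1:ℕ), x.1.2) : Letter), eb x.2)))).getLast?
      = some ((1:ℕ), false) := by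
    rw [hcc, List.concat_eq_append, List.map_append, flat_append, List.getLast?_append]
    rw [hx]
    simp [flat, eb_nil]
  -- the resulting reduced word
  have hX : Reduced (((0:ℕ), true) ::
      (flat (L.map (fun x => ((((1:ℕ), x.1.2) : Letter), eb x.2))) ++ [((0:ℕ), false)])) := by
    refine List.isChain_cons.mpr ⟨?_, ?_⟩
    · intro y hy
      rw [List.head?_append] at hy
      have hfne := flat_ne_nil hL1ne
      cases hhf : (flat (L.map (fun x => ((((1:ℕ), x.1.2) : Letter), eb x.2)))).head? with
      | none =>
        rw [List.head?_eq_none_iff] at hhf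
        exact absurd hhf hfne
      | some z =>
        rw [hhf] at hy
        have hz : z.1 = 1 := by
          rw [hhd1] at hhf
          cases hL : L.map (fun x => ((((1:ℕ), x.1.2) : Letter), eb x.2)) with
          | nil => rw [hL] at hhf; simp at hhf
          | cons a t =>
            rw [hL] at hhf
            simp at hhf
            rw [← hhf]
            exact (hall1 a (by rw [hL]; exact List.mem_cons_self)).1
        have hyz : y = z := by
          have : (some z : Option Letter) = some y := hy
          exact (Option.some.inj this).symm
        rintro ⟨h1, _⟩
        rw [hyz, hz] at h1
        simp at h1
    · rw [List.isChain_append]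
      refine ⟨hred1, List.isChain_singleton _, ?_⟩
      intro a ha y hy
      rw [hlast1] at ha
      have ha' : a = ((1:ℕ), false) := Option.some.inj ha.symm
      have hy' : y = ((0:ℕ), false) := by simpa using hy.symm
      rintro ⟨h1, _⟩
      rw [ha', hy'] at h1
      simp at h1
  have hmkX : FreeGroup.mk (((0:ℕ), true) ::
      (flat (L.map (fun x => ((((1:ℕ), x.1.2) : Letter), eb x.2))) ++ [((0:ℕ), false)]))
      = artin 0 g := by
    rw [show (((0:ℕ), true) ::
        (flat (L.map (fun x => ((((1:ℕ), x.1.2) : Letter), eb x.2))) ++ [((0:ℕ), false)]))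
        = [((0:ℕ), true)] ++ flat (L.map (fun x => ((((1:ℕ), x.1.2) : Letter), eb x.2)))
          ++ [((0:ℕ), false)] by simp]
    rw [← FreeGroup.mul_mk, ← FreeGroup.mul_mk, mk_true, mk_false]
    rw [mk_flat, List.map_map]
    have hpt1 : ∀ x ∈ L,
        ((fun y => FreeGroup.mk [y.1] * FreeGroup.mk y.2) ∘
          (fun x => ((((1:ℕ), x.1.2) : Letter), eb x.2))) x
        = FreeGroup.mk [((1:ℕ), x.1.2)] *
            ((FreeGroup.of 0)⁻¹ * artin 0 (FreeGroup.mk x.2) * FreeGroup.of 0) := by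
      intro x _hx
      show FreeGroup.mk [((1:ℕ), x.1.2)] * FreeGroup.mk (eb x.2) = _
      rw [eb, FreeGroup.mk_toWord]
    rw [List.map_congr_left hpt1]
    have hg : artin 0 g
        = (L.map (fun x => artin 0 (FreeGroup.mk [x.1] * FreeGroup.mk x.2))).prod := by
      conv_lhs => rw [← FreeGroup.mk_toWord (x := g), ← hfl, mk_flat]
      rw [map_list_prod, List.map_map]
      rfl
    rw [hg]
    have hpt2 : ∀ x ∈ L, artin 0 (FreeGroup.mk [x.1] * FreeGroup.mk x.2) =
        FreeGroup.of 0 * FreeGroup.mk [((1:ℕ), x.1.2)] * (FreeGroup.of 0)⁻¹ *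
          artin 0 (FreeGroup.mk x.2) := by
      intro x hx
      rw [_root_.map_mul]
      congr 1
      have hx1 : x.1.1 = 0 := (hall x hx).1
      cases hb : x.1.2
      · rw [show x.1 = ((0:ℕ), false) from Prod.ext hx1 hb, mk_false, _root_.map_inv,
          a_self 0, mk_false]
        group
      · rw [show x.1 = ((0:ℕ), true) from Prod.ext hx1 hb, mk_true, a_self 0, mk_true]
    rw [List.map_congr_left hpt2]
    have hcp := conj_prod (FreeGroup.of 0)
      (L.map (fun x => (FreeGroup.mk [((1:ℕ), x.1.2)], artin 0 (FreeGroup.mk x.2))))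
    rw [List.map_map, List.map_map] at hcp
    exact hcp.symm
  have htw : (artin 0 g).toWord = ((0:ℕ), true) ::
      (flat (L.map (fun x => ((((1:ℕ), x.1.2) : Letter), eb x.2))) ++ [((0:ℕ), false)]) :=
    toWord_eq hX hmkX
  constructor
  · rw [htw]
    rfl
  · rw [htw]
    rw [show (((0:ℕ), true) ::
        (flat (L.map (fun x => ((((1:ℕ), x.1.2) : Letter), eb x.2))) ++ [((0:ℕ), false)]))
        = (((0:ℕ), true) :: flat (L.map (fun x => ((((1:ℕ), x.1.2) : Letter), eb x.2))))
          ++ [((0:ℕ), false)] by simp]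
    rw [List.getLast?_concat]

end FW
end LDP
namespace LDP
namespace FW

theorem inv_base : Inv (artin 0 (FreeGroup.of (0:ℕ))) := by
  have h1 : artin 0 (FreeGroup.of (0:ℕ)) =
      FreeGroup.mk [((0:ℕ), true), ((1:ℕ), true), ((0:ℕ), false)] := by
    rw [a_self 0]
    rw [← mk_false 0, ← mk_true 0, ← mk_true 1, FreeGroup.mul_mk, FreeGroup.mul_mk]
    rfl
  have hred : Reduced [((0:ℕ), true), ((1:ℕ), true), ((0:ℕ), false)] := by
    refine List.isChain_cons_cons.mpr ⟨by simp, ?_⟩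
    refine List.isChain_cons_cons.mpr ⟨by simp, ?_⟩
    exact List.isChain_singleton _
  constructor
  · rw [toWord_eq hred h1.symm]
    rfl
  · rw [toWord_eq hred h1.symm]
    rfl

theorem a_pos_inv {p : B} (hp : SigmaPos p) :
    ∀ x : F, (Inv x ∨ x = FreeGroup.of 0) → Inv (A p x) := by
  induction hp with
  | base u v =>
    intro x hx
    simp only [_root_.map_mul, MulAut.mul_apply, A_σ]
    have hin : Inv (artin 0 (A (sh v) x)) := by
      rcases hx with hx | rfl
      · exact artin0_inv (good_inv (good_a_sh v) hx)
      · rw [(good_a_sh v).1]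
        exact inv_base
    exact good_inv (good_a_sh u) hin
  | step p c d hp ih =>
    intro x hx
    simp only [_root_.map_mul, MulAut.mul_apply, A_σ]
    have hin : Inv (artin 0 (A (sh d) x)) := by
      rcases hx with hx | rfl
      · exact artin0_inv (good_inv (good_a_sh d) hx)
      · rw [(good_a_sh d).1]
        exact inv_base
    exact ih _ (Or.inl (good_inv (good_a_sh c) hin))

end FW

theorem sigmaPos_ne_one {p : B} (h : SigmaPos p) : p ≠ 1 := by
  intro hp1
  have hinv := FW.a_pos_inv h (FreeGroup.of 0) (Or.inr rfl)
  rw [hp1, _root_.map_one] at hinv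
  exact FW.not_inv_of0 (by simpa using hinv)

theorem irrefl (a : W) : ¬ leftSubL a a := by
  rintro ⟨l, hl, hf⟩
  obtain ⟨p, hp, he⟩ := fold_pos a l hl
  have hp1 : bev a * p = bev a * 1 := by
    rw [mul_one, ← he]
    exact bev_ldeq hf
  exact sigmaPos_ne_one hp (mul_left_cancel hp1)

end LDP
theorem stmt_3 :
    (∀ a : W, ¬ leftSubL a a) ∧
    (∀ a b : W,
      (LDEq a b ∨ leftSubL a b ∨ leftSubL b a) ∧
      ¬ (LDEq a b ∧ leftSubL a b) ∧
      ¬ (LDEq a b ∧ leftSubL b a) ∧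
      ¬ (leftSubL a b ∧ leftSubL b a)) ∧
    (∀ a b c : W, LDEq (c.mul a) (c.mul b) → LDEq a b) := by
  refine ⟨LDP.irrefl, fun a b => ?_, fun a b c h => ?_⟩
  · refine ⟨LDP.comparison a b, ?_, ?_, ?_⟩
    · rintro ⟨he, hs⟩; exact LDP.irrefl a (LDP.sub_congr_right hs he.symm)
    · rintro ⟨he, hs⟩; exact LDP.irrefl b (LDP.sub_congr_right hs he)
    · rintro ⟨h1, h2⟩; exact LDP.irrefl a (LDP.sub_trans h1 h2)
  · rcases LDP.comparison a b with he | hs | hs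
    · exact he
    · exact absurd (LDP.sub_congr_right (LDP.sub_mul c hs) h.symm)
        (LDP.irrefl (c.mul a))
    · exact absurd (LDP.sub_congr_right (LDP.sub_mul c hs) h)
        (LDP.irrefl (c.mul b))
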